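/- Let A be an n×n matrix with nonnegative entries and fix a row i with positive row sum. Suppose a randomized procedure, given a vector x ∈ {0,1}ⁿ with ⟨A_{i*},x⟩ > 0, either returns the unique index j with x_j = 1 when x has exactly one 1, or splits x into y + z (y and z having disjoint supports partitioning the support of x) and recurses on y with probability ⟨A_{i*},y⟩/⟨A_{i*},x⟩ and on z with probability ⟨A_{i*},z⟩/⟨A_{i*},x⟩. Then for every column index j, the procedure started at x returns j with probability A_{ij}·x_j / ⟨A_{i*},x⟩. -/

import Mathlib

/-- Correctness of the REGR sampling procedure: if `P x j` denotes the probability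
that the recursive procedure started at the 0/1-vector `x` returns column `j`
(base case: `x` has a single `1`; recursive case: split `x = y + z` into
disjointly supported 0/1-vectors and recurse with probabilities proportional to
`⟨A_{i*},y⟩` and `⟨A_{i*},z⟩`), then `P x j = A i j * x j / ⟨A_{i*}, x⟩`
whenever `⟨A_{i*}, x⟩ > 0`. -/
theorem stmt_5 (n : ℕ) (A : Matrix (Fin n) (Fin n) ℝ)
    (hA : ∀ i j, 0 ≤ A i j) (i : Fin n)
    (P : (Fin n → ℝ) → Fin n → ℝ)
    (hbase : ∀ x : Fin n → ℝ, (∀ k, x k = 0 ∨ x k = 1) →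
      ∀ j0 : Fin n, x j0 = 1 → (∀ k, k ≠ j0 → x k = 0) →
      ∀ j, P x j = if j = j0 then 1 else 0)
    (hsplit : ∀ x : Fin n → ℝ, (∀ k, x k = 0 ∨ x k = 1) →
      1 < (Finset.univ.filter fun k => x k = 1).card →
      ∃ y z : Fin n → ℝ,
        (∀ k, y k = 0 ∨ y k = 1) ∧ (∀ k, z k = 0 ∨ z k = 1) ∧
        (∀ k, x k = y k + z k) ∧ (∀ k, ¬(y k = 1 ∧ z k = 1)) ∧
        (∃ k, y k = 1) ∧ (∃ k, z k = 1) ∧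
        (∀ j, P x j = ((∑ u, A i u * y u) / (∑ u, A i u * x u)) * P y j
                    + ((∑ u, A i u * z u) / (∑ u, A i u * x u)) * P z j)) :
    ∀ x : Fin n → ℝ, (∀ k, x k = 0 ∨ x k = 1) →
      0 < ∑ u, A i u * x u →
      ∀ j, P x j = A i j * x j / ∑ u, A i u * x u := by
  have key : ∀ m : ℕ, ∀ x : Fin n → ℝ, (∀ k, x k = 0 ∨ x k = 1) →
      (Finset.univ.filter fun k => x k = 1).card = m →
      0 < ∑ u, A i u * x u → ∀ j, P x j = A i j * x j / ∑ u, A i u * x u := by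
    intro m
    induction m using Nat.strong_induction_on with
    | _ m ih =>
      intro x hx hcard hpos j
      -- nonnegativity of each term
      have hterm : ∀ (w : Fin n → ℝ), (∀ k, w k = 0 ∨ w k = 1) → ∀ u, 0 ≤ A i u * w u := by
        intro w hw u
        rcases hw u with h | h <;> simp [h, hA]
      -- if the weighted sum over w is 0 then each A i u * w u = 0
      have hzero : ∀ (w : Fin n → ℝ), (∀ k, w k = 0 ∨ w k = 1) →
          (∑ u, A i u * w u) = 0 → ∀ u, A i u * w u = 0 := by
        intro w hw hs u
        have h1 := Finset.single_le_sum (f := fun u => A i u * w u)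
          (fun u _ => hterm w hw u) (Finset.mem_univ u)
        have h2 := hterm w hw u
        have h1' : A i u * w u ≤ ∑ u : Fin n, A i u * w u := h1
        linarith
      -- support of x is nonempty
      have hne : ∃ k, x k = 1 := by
        by_contra h
        push_neg at h
        have : ∀ u ∈ Finset.univ, A i u * x u = 0 := by
          intro u _
          rcases hx u with h0 | h1
          · simp [h0]
          · exact absurd h1 (h u)
        rw [Finset.sum_eq_zero this] at hpos
        exact lt_irrefl 0 hpos
      have hm1 : 1 ≤ m := by
        obtain ⟨k, hk⟩ := hne
        have : k ∈ Finset.univ.filter fun k => x k = 1 := by simp [hk]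
        have := Finset.card_pos.mpr ⟨k, this⟩
        omega
      rcases eq_or_lt_of_le hm1 with hm | hm
      · -- base case : exactly one 1
        have h1 : (Finset.univ.filter fun k => x k = 1).card = 1 := by omega
        obtain ⟨j0, hj0⟩ := Finset.card_eq_one.mp h1
        have hxj0 : x j0 = 1 := by
          have : j0 ∈ Finset.univ.filter fun k => x k = 1 := by simp [hj0]
          simpa using this
        have hrest : ∀ k, k ≠ j0 → x k = 0 := by
          intro k hk
          rcases hx k with h0 | h1'
          · exact h0
          · exfalso
            have : k ∈ Finset.univ.filter fun k => x k = 1 := by simp [h1']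
            rw [hj0] at this
            exact hk (Finset.mem_singleton.mp this)
        have hsum : (∑ u, A i u * x u) = A i j0 := by
          rw [Finset.sum_eq_single j0]
          · simp [hxj0]
          · intro u _ hu; simp [hrest u hu]
          · intro h; exact absurd (Finset.mem_univ j0) h
        rw [hbase x hx j0 hxj0 hrest j, hsum]
        by_cases hj : j = j0
        · subst hj
          rw [hxj0]
          rw [hsum] at hpos
          field_simp
          simp
        · simp [hj, hrest j hj]
      · -- recursive case
        have hcard' : 1 < (Finset.univ.filter fun k => x k = 1).card := by omega
        obtain ⟨y, z, hy, hz, hxyz, hdisj, ⟨ky, hky⟩, ⟨kz, hkz⟩, hP⟩ := hsplit x hx hcard'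
        set Sx := ∑ u, A i u * x u with hSx
        set Sy := ∑ u, A i u * y u with hSy
        set Sz := ∑ u, A i u * z u with hSz
        have hsum : Sx = Sy + Sz := by
          rw [hSx, hSy, hSz, ← Finset.sum_add_distrib]
          exact Finset.sum_congr rfl (fun u _ => by rw [hxyz u]; ring)
        -- subset facts
        have hysub : (Finset.univ.filter fun k => y k = 1) ⊆ (Finset.univ.filter fun k => x k = 1) := by
          intro k hk
          simp only [Finset.mem_filter, Finset.mem_univ, true_and] at hk ⊢
          have hz0 : z k = 0 := by
            rcases hz k with h | h
            · exact h
            · exact absurd ⟨hk, h⟩ (hdisj k)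
          rw [hxyz k, hk, hz0]; ring
        have hzsub : (Finset.univ.filter fun k => z k = 1) ⊆ (Finset.univ.filter fun k => x k = 1) := by
          intro k hk
          simp only [Finset.mem_filter, Finset.mem_univ, true_and] at hk ⊢
          have hy0 : y k = 0 := by
            rcases hy k with h | h
            · exact h
            · exact absurd ⟨h, hk⟩ (hdisj k)
          rw [hxyz k, hk, hy0]; ring
        have hdisjf : Disjoint (Finset.univ.filter fun k => y k = 1)
            (Finset.univ.filter fun k => z k = 1) := by
          rw [Finset.disjoint_left]
          intro k hk hk'
          simp only [Finset.mem_filter, Finset.mem_univ, true_and] at hk hk'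
          exact hdisj k ⟨hk, hk'⟩
        have hcards : (Finset.univ.filter fun k => y k = 1).card
            + (Finset.univ.filter fun k => z k = 1).card ≤ m := by
          rw [← Finset.card_union_of_disjoint hdisjf, ← hcard]
          exact Finset.card_le_card (Finset.union_subset hysub hzsub)
        have hyc : 0 < (Finset.univ.filter fun k => y k = 1).card :=
          Finset.card_pos.mpr ⟨ky, by simp [hky]⟩
        have hzc : 0 < (Finset.univ.filter fun k => z k = 1).card :=
          Finset.card_pos.mpr ⟨kz, by simp [hkz]⟩
        have hylt : (Finset.univ.filter fun k => y k = 1).card < m := by omega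
        have hzlt : (Finset.univ.filter fun k => z k = 1).card < m := by omega
        have hynn : 0 ≤ Sy := Finset.sum_nonneg (fun u _ => hterm y hy u)
        have hznn : 0 ≤ Sz := Finset.sum_nonneg (fun u _ => hterm z hz u)
        have hyterm : (Sy / Sx) * P y j = A i j * y j / Sx := by
          rcases eq_or_lt_of_le hynn with h0 | hypos
          · have := hzero y hy h0.symm j
            rw [← h0, this]
            simp
          · rw [ih _ hylt y hy rfl hypos j, ← hSy]
            field_simp
        have hzterm : (Sz / Sx) * P z j = A i j * z j / Sx := by
          rcases eq_or_lt_of_le hznn with h0 | hzpos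
          · have := hzero z hz h0.symm j
            rw [← h0, this]
            simp
          · rw [ih _ hzlt z hz rfl hzpos j, ← hSz]
            field_simp
        rw [hP j, hyterm, hzterm, hxyz j]
        ring
  intro x hx hpos j
  exact key _ x hx rfl hpos j
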